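/- For every integer n \ge 2, the polynomial \ell(\Gamma(D_n), x) = \sum_{i=1}^{\lfloor n/2 \rfloor} \frac{n-2}{i} \binom{2i-2}{i-1} \binom{n-2}{2i-2} x^i (1+x)^{n-2i} equals (n-2)\, x \sum_{i=0}^{n-2} \frac{1}{n-1} \binom{n-1}{i} \binom{n-1}{i+1} x^i. -/

import Mathlib

open Polynomial Finset

noncomputable def Fc (m t j : ℕ) : ℝ :=
  if j ≤ t then ((catalan j : ℝ) * (m.choose (2*j)) * ((m - 2*j).choose (t - j))) else 0

noncomputable def Gc (m t j : ℕ) : ℝ :=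
  if j ≤ t then
    (2*(t:ℝ) - m - 1) * j * (j+1) * (catalan j : ℝ) * (m.choose (2*j)) *
      ((m - 2*j + 1).choose (t - j)) / ((m - 2*j : ℕ) + 1)
  else 0

lemma cat_succ (j : ℕ) : (j+2) * catalan (j+1) = 2*(2*j+1) * catalan j := by
  have h1 := succ_mul_catalan_eq_centralBinom (j+1)
  have h2 := Nat.succ_mul_centralBinom_succ j
  have h3 := succ_mul_catalan_eq_centralBinom j
  have key : (j+1) * ((j+2) * catalan (j+1)) = (j+1) * (2*(2*j+1) * catalan j) := by
    calc (j+1) * ((j+2) * catalan (j+1)) = (j+1) * ((j+1+1) * catalan (j+1)) := by ring_nf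
    _ = (j+1) * Nat.centralBinom (j+1) := by rw [h1]
    _ = 2*(2*j+1) * Nat.centralBinom j := by rw [h2]
    _ = 2*(2*j+1) * ((j+1) * catalan j) := by rw [h3]
    _ = (j+1) * (2*(2*j+1) * catalan j) := by ring
  exact Nat.eq_of_mul_eq_mul_left (by omega) key

lemma cast_choose_right (a b : ℕ) :
    ((a:ℝ) - b) * (a.choose b) = ((b:ℝ)+1) * (a.choose (b+1)) := by
  rcases le_or_gt (b+1) a with h | h
  · have hc : ((a.choose (b+1) * (b+1) : ℕ) : ℝ) = ((a.choose b * (a - b) : ℕ) : ℝ) :=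
      congrArg _ (Nat.choose_succ_right_eq a b)
    push_cast [Nat.cast_sub (by omega : b ≤ a)] at hc
    linarith [hc]
  · rcases le_or_gt b a with h2 | h2
    · have ha : a = b := by omega
      subst ha
      simp [Nat.choose_succ_self]
    · rw [Nat.choose_eq_zero_of_lt h2, Nat.choose_eq_zero_of_lt (by omega)]
      simp

lemma key_telescope (m t j : ℕ) (ht : 1 ≤ t) (hj : j ≤ t) :
    (t:ℝ)*((t:ℝ)+1) * Fc m t j - ((m:ℝ)+2-t)*((m:ℝ)+1-t) * Fc m (t-1) j
      = Gc m t (j+1) - Gc m t j := by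
  rcases hj.lt_or_eq with hjt | rfl
  · -- j < t
    unfold Fc Gc
    rw [if_pos hj, if_pos (show j ≤ t - 1 by omega), if_pos (show j + 1 ≤ t by omega),
      if_pos hj]
    rcases le_or_gt (2*j) m with hm | hm
    · obtain ⟨a, rfl⟩ : ∃ a, m = a + 2*j := ⟨m - 2*j, by omega⟩
      obtain ⟨w, rfl⟩ : ∃ w, t = w + 1 + j := ⟨t - 1 - j, by omega⟩
      simp only [show a + 2*j - 2*j = a by omega, show w + 1 + j - j = w + 1 by omega,
        show w + 1 + j - 1 - j = w by omega, show w + 1 + j - (j+1) = w by omega,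
        show a + 2*j - 2*(j+1) = a - 2 by omega, show 2*(j+1) = 2*j+2 by omega,
        show a + 2*j - (2*j+2) = a - 2 by omega]
      rcases a with _ | _ | b
      · -- a = 0 : m = 2*j
        rcases w with _ | v
        · -- w = 0
          simp only [Nat.zero_add, Nat.choose_self, Nat.choose_zero_right,
            Nat.choose_one_right, Nat.zero_sub, Nat.zero_sub,
            Nat.choose_eq_zero_of_lt (show 2*j < 2*j + 2 by omega)]
          push_cast
          ring
        · simp only [Nat.zero_add, Nat.choose_self,
            Nat.choose_eq_zero_of_lt (show 2*j < 2*j + 2 by omega),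
            Nat.choose_eq_zero_of_lt (show 0 < v + 1 + 1 by omega),
            Nat.choose_eq_zero_of_lt (show 0 < v + 1 by omega),
            Nat.zero_sub,
            Nat.choose_eq_zero_of_lt (show 0 + 1 < v + 1 + 1 by omega)]
          push_cast
          ring
      · -- a = 1 : m = 1 + 2*j
        rcases w with _ | _ | v
        · simp only [Nat.choose_self, Nat.choose_zero_right, Nat.choose_one_right,
            Nat.choose_eq_zero_of_lt (show 1 + 2*j < 2*j + 2 by omega)]
          push_cast
          ring
        · simp only [Nat.choose_self, Nat.choose_one_right,
            Nat.choose_eq_zero_of_lt (show 1 + 2*j < 2*j + 2 by omega),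
            Nat.choose_eq_zero_of_lt (show 1 < 1 + 1 by omega)]
          push_cast
          ring
        · simp only [Nat.choose_self,
            Nat.choose_eq_zero_of_lt (show 1 + 2*j < 2*j + 2 by omega),
            Nat.choose_eq_zero_of_lt (show 1 < v + 1 + 1 + 1 by omega),
            Nat.choose_eq_zero_of_lt (show 1 < v + 1 + 1 by omega),
            Nat.choose_eq_zero_of_lt (show 1 + 1 < v + 1 + 1 + 1 by omega)]
          push_cast
          ring
      · -- a = b + 2
        have hsub : b + 1 + 1 - 2 = b := by omega
        rw [hsub]
        rcases lt_trichotomy w (b + 2) with hw | hw | hw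
        · -- generic case : w + 1 ≤ b + 2
          have e1 := Nat.choose_succ_right_eq (b+2) w
          have e2 := Nat.add_one_mul_choose_eq (b+2) w
          have e3 := Nat.add_one_mul_choose_eq (b+1) w
          have e4 := Nat.choose_succ_right_eq (b+2+2*j) (2*j)
          have e5 := Nat.choose_succ_right_eq (b+2+2*j) (2*j+1)
          have e6 := cat_succ j
          -- cast to ℝ
          have hwb : (w:ℝ) < (b:ℝ) + 2 := by exact_mod_cast hw
          have d1 : ((b:ℝ) + 2 - w) ≠ 0 := by linarith
          have hK1 : ((b+2).choose w : ℝ) = ((b+2).choose (w+1) : ℝ) * ((w:ℝ)+1) / ((b:ℝ)+2-w) := by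
            rw [eq_div_iff d1]
            have : (((b+2).choose (w+1) * (w+1) : ℕ) : ℝ) = (((b+2).choose w * ((b+2) - w) : ℕ) : ℝ) := by
              exact_mod_cast e1
            push_cast [Nat.cast_sub (by omega : w ≤ b + 2)] at this
            linarith [this]
          have hP : ((b+3).choose (w+1) : ℝ) = ((b:ℝ)+3) * ((b+2).choose w : ℝ) / ((w:ℝ)+1) := by
            rw [eq_div_iff (by positivity)]
            have : (((b+2+1) * (b+2).choose w : ℕ) : ℝ) = (((b+3).choose (w+1) * (w+1) : ℕ) : ℝ) := by
              exact_mod_cast e2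
            push_cast at this
            linarith [this]
          have hQ : ((b+1).choose w : ℝ) = ((b+2).choose (w+1) : ℝ) * ((w:ℝ)+1) / ((b:ℝ)+2) := by
            rw [eq_div_iff (by positivity)]
            have : (((b+1+1) * (b+1).choose w : ℕ) : ℝ) = (((b+2).choose (w+1) * (w+1) : ℕ) : ℝ) := by
              exact_mod_cast e3
            push_cast at this
            linarith [this]
          have hB1 : ((b+2+2*j).choose (2*j+1) : ℝ)
              = ((b+2+2*j).choose (2*j) : ℝ) * ((b:ℝ)+2) / (2*(j:ℝ)+1) := by
            rw [eq_div_iff (by positivity)]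
            have : (((b+2+2*j).choose (2*j+1) * (2*j+1) : ℕ) : ℝ)
                = (((b+2+2*j).choose (2*j) * ((b+2+2*j) - 2*j) : ℕ) : ℝ) := by
              exact_mod_cast e4
            push_cast [show b+2+2*j - 2*j = b + 2 by omega] at this
            linarith [this]
          have hB2 : ((b+2+2*j).choose (2*j+2) : ℝ)
              = ((b+2+2*j).choose (2*j+1) : ℝ) * ((b:ℝ)+1) / (2*(j:ℝ)+2) := by
            rw [eq_div_iff (by positivity)]
            have : (((b+2+2*j).choose (2*j+1+1) * (2*j+1+1) : ℕ) : ℝ)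
                = (((b+2+2*j).choose (2*j+1) * ((b+2+2*j) - (2*j+1)) : ℕ) : ℝ) := by
              exact_mod_cast e5
            push_cast [show b+2+2*j - (2*j+1) = b + 1 by omega] at this
            linarith [this]
          have hc1 : (catalan (j+1) : ℝ) = 2*(2*(j:ℝ)+1) * (catalan j : ℝ) / ((j:ℝ)+2) := by
            rw [eq_div_iff (by positivity)]
            have : (((j+2) * catalan (j+1) : ℕ) : ℝ) = ((2*(2*j+1) * catalan j : ℕ) : ℝ) := by
              exact_mod_cast e6
            push_cast at this
            linarith [this]
          have h313 : b + 2 + 1 = b + 3 := by omega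
          rw [show b + 1 + 1 = b + 2 by omega, show b + 2 + 1 = b + 3 by omega] at *
          push_cast
          rw [hc1, hB2, hB1, hQ, hP, hK1]
          have d2 : ((w:ℝ)+1) ≠ 0 := by positivity
          have d3 : ((b:ℝ)+2) ≠ 0 := by positivity
          have d4 : ((b:ℝ)+3) ≠ 0 := by positivity
          have d5 : (2*(j:ℝ)+1) ≠ 0 := by positivity
          have d6 : (2*(j:ℝ)+2) ≠ 0 := by positivity
          have d7 : ((j:ℝ)+2) ≠ 0 := by positivity
          have d8 : ((b:ℝ)+1) ≠ 0 := by positivity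
          field_simp
          ring
        · -- w = b + 2 : boundary
          subst hw
          rw [show b + 1 + 1 = b + 2 by omega]
          simp only [Nat.choose_self,
            Nat.choose_eq_zero_of_lt (show b + 2 < b + 2 + 1 by omega),
            Nat.choose_eq_zero_of_lt (show b + 1 < b + 2 by omega),
            Nat.choose_succ_self_right]
          push_cast
          have d1 : ((b:ℝ)+2+1) ≠ 0 := by positivity
          field_simp
          ring
        · -- w > b + 2 : all zero
          rw [show b + 1 + 1 = b + 2 by omega]
          simp only [Nat.choose_eq_zero_of_lt (show b + 2 < w + 1 by omega),
            Nat.choose_eq_zero_of_lt (show b + 2 < w by omega),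
            Nat.choose_eq_zero_of_lt (show b + 2 + 1 < w + 1 by omega),
            Nat.choose_eq_zero_of_lt (show b + 1 < w by omega)]
          push_cast
          ring
    · -- m < 2*j : choose m (2*j) = 0
      rw [Nat.choose_eq_zero_of_lt hm,
        Nat.choose_eq_zero_of_lt (show m < 2*(j+1) by omega)]
      push_cast
      ring
  · -- j = t
    unfold Fc Gc
    rw [if_pos le_rfl, if_neg (show ¬ j ≤ j - 1 by omega),
      if_neg (show ¬ j + 1 ≤ j by omega), if_pos le_rfl]
    simp only [Nat.sub_self, Nat.choose_zero_right]
    rcases le_or_gt (2*j) m with hm | hm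
    · have hc : ((m - 2*j : ℕ) : ℝ) = (m:ℝ) - 2*j := by
        push_cast [Nat.cast_sub hm]
        ring
      rw [hc]
      have hd : (m:ℝ) - 2*(j:ℝ) + 1 ≠ 0 := by
        have : (2*(j:ℝ)) ≤ (m:ℝ) := by exact_mod_cast hm
        linarith
      apply (mul_left_inj' hd).mp
      simp only [sub_mul, div_mul_cancel₀ _ hd]
      push_cast
      ring
    · rw [Nat.choose_eq_zero_of_lt hm]
      push_cast
      ring

noncomputable def Ac (m t : ℕ) : ℝ := ∑ j ∈ Finset.range (t+1), Fc m t j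

lemma Ac_rec (m t : ℕ) (ht : 1 ≤ t) :
    (t:ℝ)*((t:ℝ)+1) * Ac m t = ((m:ℝ)+2-t)*((m:ℝ)+1-t) * Ac m (t-1) := by
  have h : ∑ j ∈ Finset.range (t+1),
      ((t:ℝ)*((t:ℝ)+1) * Fc m t j - ((m:ℝ)+2-t)*((m:ℝ)+1-t) * Fc m (t-1) j)
      = ∑ j ∈ Finset.range (t+1), (Gc m t (j+1) - Gc m t j) := by
    refine Finset.sum_congr rfl fun j hj => ?_
    exact key_telescope m t j ht (by simpa using Nat.lt_succ_iff.mp (Finset.mem_range.mp hj))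
  rw [Finset.sum_range_sub (Gc m t)] at h
  have hG1 : Gc m t (t+1) = 0 := by
    unfold Gc; rw [if_neg (by omega)]
  have hG0 : Gc m t 0 = 0 := by
    unfold Gc; rw [if_pos (by omega)]; push_cast; ring
  rw [hG1, hG0, sub_zero] at h
  rw [Finset.sum_sub_distrib, ← Finset.mul_sum, ← Finset.mul_sum] at h
  have hlast : ∑ j ∈ Finset.range (t+1), Fc m (t-1) j = Ac m (t-1) := by
    rw [Finset.sum_range_succ]
    have : Fc m (t-1) t = 0 := by unfold Fc; rw [if_neg (by omega)]
    rw [this, add_zero, Ac, show t - 1 + 1 = t by omega]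
  rw [hlast] at h
  have hA : Ac m t = ∑ j ∈ Finset.range (t+1), Fc m t j := rfl
  rw [← hA] at h
  linarith [h]

lemma Ac_main (m t : ℕ) :
    ((m:ℝ)+1) * Ac m t = (((m+1).choose t : ℕ) : ℝ) * (((m+1).choose (t+1) : ℕ) : ℝ) := by
  induction t with
  | zero =>
    have : Ac m 0 = 1 := by
      unfold Ac Fc
      simp
    rw [this]
    simp [Nat.choose_one_right]
  | succ t ih =>
    have h := Ac_rec m (t+1) (by omega)
    simp only [Nat.add_sub_cancel] at h
    push_cast at h
    have c1 := cast_choose_right (m+1) t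
    have c2 := cast_choose_right (m+1) (t+1)
    push_cast at c1 c2
    have hne : ((t:ℝ)+1)*((t:ℝ)+2) ≠ 0 := by positivity
    apply mul_left_cancel₀ hne
    set A1 := Ac m (t+1)
    set A0 := Ac m t
    set C0 := (((m+1).choose t : ℕ) : ℝ)
    set C1 := (((m+1).choose (t+1) : ℕ) : ℝ)
    set C2 := (((m+1).choose (t+1+1) : ℕ) : ℝ)
    linear_combination ((m:ℝ)+1) * h + ((m:ℝ)+1-t)*((m:ℝ)-t) * ih
      + ((m:ℝ)-t) * C1 * c1 + ((t:ℝ)+1) * C1 * c2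

theorem stmt_14 (n : ℕ) (hn : 2 ≤ n) :
    (∑ i ∈ Finset.Icc 1 (n / 2),
        C (((n : ℝ) - 2) / i * ((2 * i - 2).choose (i - 1)) * ((n - 2).choose (2 * i - 2))) *
          X ^ i * (1 + X) ^ (n - 2 * i)) =
      C ((n : ℝ) - 2) * X *
        ∑ i ∈ Finset.range (n - 1),
          C ((1 / ((n : ℝ) - 1)) * ((n - 1).choose i) * ((n - 1).choose (i + 1))) *
            (X : Polynomial ℝ) ^ i := by
  obtain ⟨m, rfl⟩ : ∃ m, n = m + 2 := ⟨n - 2, by omega⟩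
  simp only [show m + 2 - 2 = m by omega, show m + 2 - 1 = m + 1 by omega]
  have hcastn : ((m + 2 : ℕ) : ℝ) - 2 = (m : ℝ) := by push_cast; ring
  have hcastn1 : ((m + 2 : ℕ) : ℝ) - 1 = (m : ℝ) + 1 := by push_cast; ring
  rw [hcastn]
  -- Step 1: rewrite the left side
  have hL : (∑ i ∈ Finset.Icc 1 ((m + 2) / 2),
        C (((m:ℝ)) / i * ((2 * i - 2).choose (i - 1)) * (m.choose (2 * i - 2))) *
          X ^ i * (1 + X) ^ (m + 2 - 2 * i))
      = C (m : ℝ) * ∑ i ∈ Finset.Icc 1 ((m + 2) / 2),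
          C ((catalan (i-1) : ℝ) * (m.choose (2 * i - 2) : ℝ)) *
            X ^ i * (1 + X) ^ (m + 2 - 2 * i) := by
    rw [Finset.mul_sum]
    refine Finset.sum_congr rfl fun i hi => ?_
    have hi1 : 1 ≤ i := (Finset.mem_Icc.mp hi).1
    have hcat : (((2 * i - 2).choose (i - 1) : ℕ) : ℝ) = (i : ℝ) * (catalan (i-1) : ℝ) := by
      have h1 := succ_mul_catalan_eq_centralBinom (i-1)
      have h2 : Nat.centralBinom (i-1) = (2 * i - 2).choose (i - 1) := by
        rw [Nat.centralBinom_eq_two_mul_choose]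
        congr 1
        omega
      rw [← h2, ← h1]
      push_cast [show i - 1 + 1 = i by omega]
      ring
    have harg : (m:ℝ) / i * (((2 * i - 2).choose (i - 1) : ℕ) : ℝ) * ((m.choose (2 * i - 2) : ℕ) : ℝ)
        = (m : ℝ) * ((catalan (i-1) : ℝ) * ((m.choose (2 * i - 2) : ℕ) : ℝ)) := by
      rw [hcat]
      have hi0 : (i : ℝ) ≠ 0 := by positivity
      field_simp
    rw [harg, map_mul]
    ring
  rw [hL, mul_assoc]
  congr 1
  -- Step 2: coefficientwise
  refine Polynomial.ext fun k => ?_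
  rw [Polynomial.finset_sum_coeff]
  simp only [mul_assoc, Polynomial.coeff_C_mul, Polynomial.coeff_X_pow_mul',
    Polynomial.coeff_one_add_X_pow]
  rcases k with _ | t
  · -- k = 0
    rw [Polynomial.mul_coeff_zero, Polynomial.coeff_X_zero, zero_mul]
    refine Finset.sum_eq_zero fun i hi => ?_
    have hi1 : 1 ≤ i := (Finset.mem_Icc.mp hi).1
    rw [if_neg (show ¬ i ≤ 0 by omega)]
    ring
  · -- k = t + 1
    rw [Polynomial.coeff_X_mul, Polynomial.finset_sum_coeff]
    simp only [Polynomial.coeff_C_mul, Polynomial.coeff_X_pow, mul_ite, mul_one, mul_zero,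
      Finset.sum_ite_eq]
    have hsum : (∑ i ∈ Finset.Icc 1 ((m + 2) / 2),
        if i ≤ t + 1 then
          (catalan (i-1) : ℝ) * (((m.choose (2 * i - 2) : ℕ) : ℝ) *
            (((m + 2 - 2*i).choose (t + 1 - i) : ℕ) : ℝ)) else 0)
        = Ac m t := by
      set N := max ((m + 2) / 2) (t + 1) with hN
      have hsub1 : Finset.Icc 1 ((m + 2) / 2) ⊆ Finset.Icc 1 N :=
        Finset.Icc_subset_Icc_right (le_max_left _ _)
      have hsub2 : Finset.Icc 1 (t + 1) ⊆ Finset.Icc 1 N :=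
        Finset.Icc_subset_Icc_right (le_max_right _ _)
      have h1 : (∑ i ∈ Finset.Icc 1 ((m + 2) / 2),
          if i ≤ t + 1 then
            (catalan (i-1) : ℝ) * (((m.choose (2 * i - 2) : ℕ) : ℝ) *
              (((m + 2 - 2*i).choose (t + 1 - i) : ℕ) : ℝ)) else 0)
          = ∑ i ∈ Finset.Icc 1 N,
          if i ≤ t + 1 then
            (catalan (i-1) : ℝ) * (((m.choose (2 * i - 2) : ℕ) : ℝ) *
              (((m + 2 - 2*i).choose (t + 1 - i) : ℕ) : ℝ)) else 0 := by
        refine Finset.sum_subset hsub1 fun i hiN hi => ?_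
        have hlt : m < 2 * i - 2 := by
          simp only [Finset.mem_Icc] at hiN hi
          omega
        simp [Nat.choose_eq_zero_of_lt hlt]
      have h2 : (∑ i ∈ Finset.Icc 1 (t + 1),
          if i ≤ t + 1 then
            (catalan (i-1) : ℝ) * (((m.choose (2 * i - 2) : ℕ) : ℝ) *
              (((m + 2 - 2*i).choose (t + 1 - i) : ℕ) : ℝ)) else 0)
          = ∑ i ∈ Finset.Icc 1 N,
          if i ≤ t + 1 then
            (catalan (i-1) : ℝ) * (((m.choose (2 * i - 2) : ℕ) : ℝ) *
              (((m + 2 - 2*i).choose (t + 1 - i) : ℕ) : ℝ)) else 0 := by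
        refine Finset.sum_subset hsub2 fun i hiN hi => ?_
        have : ¬ i ≤ t + 1 := by
          simp only [Finset.mem_Icc] at hiN hi
          omega
        rw [if_neg this]
      rw [h1, ← h2, ← Finset.Ico_add_one_right_eq_Icc, Finset.sum_Ico_eq_sum_range]
      unfold Ac
      refine Finset.sum_congr (by congr 1) fun j hj => ?_
      have hjt : j ≤ t := by
        simp only [Finset.mem_range] at hj
        omega
      unfold Fc
      rw [if_pos (by omega : 1 + j ≤ t + 1), if_pos hjt]
      simp only [show 1 + j - 1 = j by omega, show 2 * (1 + j) - 2 = 2 * j by omega,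
        show m + 2 - 2 * (1 + j) = m - 2 * j by omega, show t + 1 - (1 + j) = t - j by omega]
      ring
    rw [hsum, hcastn1]
    have hmain := Ac_main m t
    have hm1 : ((m : ℝ) + 1) ≠ 0 := by positivity
    rcases lt_or_ge t (m + 1) with htm | htm
    · rw [if_pos (Finset.mem_range.mpr htm)]
      push_cast at hmain ⊢
      field_simp
      linarith [hmain]
    · rw [if_neg (by simp only [Finset.mem_range]; omega)]
      have hz : (((m+1).choose (t+1) : ℕ) : ℝ) = 0 := by
        rw [Nat.choose_eq_zero_of_lt (by omega)]
        push_cast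
        ring
      rw [hz, mul_zero] at hmain
      have := mul_eq_zero.mp hmain
      tauto
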